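/- Let R be a commutative ring and G an object of the derived category D(R) such that H^k(G) has finite length for every k and H^k(G) = 0 for |k| > N, and set B := max{ length_R(H^k(G)) : −N ≤ k ≤ N } (a natural number). If an object Y of D(R) admits a tower over G with shifts n_1, …, n_k, then H^0(Y) has finite length and, for every real number t, (length_R(H^0(Y)) : ℝ) ≤ B · e^{N·|t|} · Σ_{i=1}^{k} e^{n_i · t}. -/

import Mathlib

open CategoryTheory Limits Pretriangulated

/-- The length of a module, defined as the Krull dimension of its lattice of submodules. -/
noncomputable def moduleLength (R M : Type*) [Ring R] [AddCommGroup M] [Module R M] : ℕ∞ :=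
  WithBot.unbotD 0 (Order.krullDim (Submodule R M))

open Order

lemma exists_chains {α β : Type*} [PartialOrder α] [PartialOrder β] :
    ∀ (m : ℕ) (p : LTSeries (α × β)), p.length = m → ∃ (qa : LTSeries α) (qb : LTSeries β),
      qa.last = p.last.1 ∧ qb.last = p.last.2 ∧ p.length ≤ qa.length + qb.length := by
  intro m
  induction m with
  | zero => intro p hp
            exact ⟨RelSeries.singleton _ p.last.1, RelSeries.singleton _ p.last.2, rfl, rfl, by omega⟩
  | succ m ih =>
    intro p hp
    have hel : p.eraseLast.length = m := by simp [hp]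
    obtain ⟨qa, qb, ha, hb, hlen⟩ := ih p.eraseLast hel
    have hrel : p.eraseLast.last < p.last := p.eraseLast_last_rel_last (by omega)
    have h1 : p.eraseLast.last.1 ≤ p.last.1 := (Prod.le_def.1 hrel.le).1
    have h2 : p.eraseLast.last.2 ≤ p.last.2 := (Prod.le_def.1 hrel.le).2
    have hne : p.eraseLast.last.1 < p.last.1 ∨ p.eraseLast.last.2 < p.last.2 := by
      by_contra hc
      push_neg at hc
      have e1 : p.eraseLast.last.1 = p.last.1 := le_antisymm h1 (by
        rcases lt_or_eq_of_le h1 with h | h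
        · exact absurd h hc.1
        · exact h.ge)
      have e2 : p.eraseLast.last.2 = p.last.2 := le_antisymm h2 (by
        rcases lt_or_eq_of_le h2 with h | h
        · exact absurd h hc.2
        · exact h.ge)
      exact hrel.ne (Prod.ext e1 e2)
    rcases hne with h | h
    · rcases eq_or_lt_of_le h2 with h2e | h2l
      · exact ⟨qa.snoc p.last.1 (ha ▸ h), qb, by simp, hb.trans h2e, by
          simp only [RelSeries.snoc_length, hp]; omega⟩
      · exact ⟨qa.snoc p.last.1 (ha ▸ h), qb.snoc p.last.2 (hb ▸ h2l), by simp, by simp, by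
          simp only [RelSeries.snoc_length, hp]; omega⟩
    · rcases eq_or_lt_of_le h1 with h1e | h1l
      · exact ⟨qa, qb.snoc p.last.2 (hb ▸ h), ha.trans h1e, by simp, by
          simp only [RelSeries.snoc_length, hp]; omega⟩
      · exact ⟨qa.snoc p.last.1 (ha ▸ h1l), qb.snoc p.last.2 (hb ▸ h), by simp, by simp, by
          simp only [RelSeries.snoc_length, hp]; omega⟩

lemma krullDim_prod_le {α β : Type*} [PartialOrder α] [PartialOrder β] :
    krullDim (α × β) ≤ krullDim α + krullDim β := by
  by_cases hαβ : Nonempty (α × β)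
  · rw [show krullDim (α × β) = ⨆ (p : LTSeries (α × β)), (p.length : WithBot ℕ∞) from rfl]
    apply iSup_le
    intro p
    obtain ⟨qa, qb, -, -, hlen⟩ := exists_chains p.length p rfl
    calc (p.length : WithBot ℕ∞) ≤ (qa.length : WithBot ℕ∞) + qb.length := by
          exact_mod_cast Nat.cast_le.2 hlen
      _ ≤ krullDim α + krullDim β :=
          add_le_add (Order.LTSeries.length_le_krullDim qa) (Order.LTSeries.length_le_krullDim qb)
  · have : IsEmpty (α × β) := not_nonempty_iff.1 hαβ
    rw [krullDim_eq_bot (α := α × β)]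
    exact bot_le


section ML

variable {R M N : Type*} [Ring R] [AddCommGroup M] [Module R M] [AddCommGroup N] [Module R N]

lemma moduleLength_coe :
    ((moduleLength R M : ℕ∞) : WithBot ℕ∞) = krullDim (Submodule R M) := by
  have h0 : (0 : WithBot ℕ∞) ≤ krullDim (Submodule R M) := krullDim_nonneg
  cases h : krullDim (Submodule R M) with
  | bot => rw [h] at h0; exact absurd h0 (by simp)
  | coe a => rw [moduleLength, h, WithBot.unbotD_coe]

lemma moduleLength_le_iff {c : ℕ∞} :
    moduleLength R M ≤ c ↔ krullDim (Submodule R M) ≤ (c : WithBot ℕ∞) := by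
  rw [← moduleLength_coe, WithBot.coe_le_coe]

lemma moduleLength_eq_zero_of_subsingleton [Subsingleton M] : moduleLength R M = 0 := by
  haveI : Unique (Submodule R M) :=
    ⟨⟨⊥⟩, fun S => Submodule.ext fun x => by
      rw [Subsingleton.elim x 0]; simp⟩
  have := krullDim_eq_zero_of_unique (α := Submodule R M)
  rw [moduleLength, this]; rfl

lemma moduleLength_congr (e : M ≃ₗ[R] N) : moduleLength R M = moduleLength R N := by
  rw [moduleLength, moduleLength,
    krullDim_eq_of_orderIso (Submodule.orderIsoMapComap e)]

lemma moduleLength_le_of_injective (f : M →ₗ[R] N) (hf : Function.Injective f) :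
    moduleLength R M ≤ moduleLength R N := by
  rw [moduleLength_le_iff, moduleLength_coe]
  exact krullDim_le_of_strictMono _ (Submodule.map_strictMono_of_injective hf)

lemma moduleLength_le_of_surjective (f : M →ₗ[R] N) (hf : Function.Surjective f) :
    moduleLength R N ≤ moduleLength R M := by
  rw [moduleLength_le_iff, moduleLength_coe]
  exact krullDim_le_of_strictMono _ (Submodule.comap_strictMono_of_surjective hf)

lemma moduleLength_le_submodule (S : Submodule R M) :
    moduleLength R M ≤ moduleLength R S + moduleLength R (M ⧸ S) := by
  rw [moduleLength_le_iff, WithBot.coe_add, moduleLength_coe, moduleLength_coe]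
  refine le_trans (krullDim_le_of_strictMono
    (fun x : Submodule R M => (x.comap S.subtype, x.map S.mkQ)) ?_) krullDim_prod_le
  intro x y hxy
  have hle : x.comap S.subtype ≤ y.comap S.subtype := Submodule.comap_mono hxy.le
  have hle2 : x.map S.mkQ ≤ y.map S.mkQ := Submodule.map_mono hxy.le
  refine lt_of_le_of_ne ⟨hle, hle2⟩ ?_
  intro hEq
  have h1 : x.comap S.subtype = y.comap S.subtype := congrArg Prod.fst hEq
  have h2 : x.map S.mkQ = y.map S.mkQ := congrArg Prod.snd hEq
  refine hxy.ne (le_antisymm hxy.le ?_)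
  intro b hb
  have : S.mkQ b ∈ x.map S.mkQ := h2 ▸ Submodule.mem_map_of_mem hb
  obtain ⟨a, ha, hab⟩ := this
  have hS : b - a ∈ S := by
    have hz : S.mkQ (b - a) = 0 := by rw [map_sub, hab, sub_self]
    have hk := LinearMap.mem_ker.mpr hz
    rwa [Submodule.ker_mkQ] at hk
  have hy : b - a ∈ y := sub_mem hb (hxy.le ha)
  have : (⟨b - a, hS⟩ : S) ∈ y.comap S.subtype := hy
  rw [← h1] at this
  have hx : b - a ∈ x := this
  simpa using add_mem ha hx

lemma isFiniteLength_of_exact {A B C : Type*} [AddCommGroup A] [Module R A]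
    [AddCommGroup B] [Module R B] [AddCommGroup C] [Module R C]
    (f : A →ₗ[R] B) (g : B →ₗ[R] C) (h : LinearMap.range f = LinearMap.ker g)
    (hA : IsFiniteLength R A) (hC : IsFiniteLength R C) : IsFiniteLength R B := by
  obtain ⟨hA1, hA2⟩ := isFiniteLength_iff_isNoetherian_isArtinian.1 hA
  obtain ⟨hC1, hC2⟩ := isFiniteLength_iff_isNoetherian_isArtinian.1 hC
  exact isFiniteLength_iff_isNoetherian_isArtinian.2
    ⟨isNoetherian_of_range_eq_ker f g h, isArtinian_of_range_eq_ker f g h⟩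

lemma moduleLength_le_of_exact {A B C : Type*} [AddCommGroup A] [Module R A]
    [AddCommGroup B] [Module R B] [AddCommGroup C] [Module R C]
    (f : A →ₗ[R] B) (g : B →ₗ[R] C) (h : LinearMap.range f = LinearMap.ker g) :
    moduleLength R B ≤ moduleLength R A + moduleLength R C := by
  refine (moduleLength_le_submodule (LinearMap.ker g)).trans (add_le_add ?_ ?_)
  · rw [← h]
    exact moduleLength_le_of_surjective f.rangeRestrict f.surjective_rangeRestrict
  · rw [moduleLength_congr (g.quotKerEquivRange)]
    exact moduleLength_le_of_injective (LinearMap.range g).subtype (Submodule.injective_subtype _)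

end ML

lemma moduleCat_subsingleton_of_isZero {S : Type*} [Ring S] {X : ModuleCat S} (h : IsZero X) :
    Subsingleton X := by
  refine ⟨fun a b => ?_⟩
  have h1 : (𝟙 X : X ⟶ X) = 0 := h.eq_of_src _ _
  have ha := congrArg (fun φ => ModuleCat.Hom.hom φ a) h1
  have hb := congrArg (fun φ => ModuleCat.Hom.hom φ b) h1
  simp only [ModuleCat.id_apply] at ha hb
  rw [ha, hb]
  show (0 : X →ₗ[S] X) a = (0 : X →ₗ[S] X) b
  simp

universe w u

variable {R : Type u} [CommRing R] [HasDerivedCategory.{w} (ModuleCat.{u} R)]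

/-- A tower of distinguished triangles over `G` reaching `Y` with shifts `n 0, …, n (k-1)`:
objects `0 ≅ E 0, E 1, …, E k ≅ Y` of the derived category together with distinguished
triangles `E i ⟶ E (i+1) ⟶ G⟦n i⟧ ⟶ (E i)⟦1⟧`. -/
def IsTower (G Y : DerivedCategory (ModuleCat.{u} R)) {k : ℕ} (n : Fin k → ℤ)
    (E : Fin (k + 1) → DerivedCategory (ModuleCat.{u} R)) : Prop :=
  IsZero (E 0) ∧ Nonempty (E (Fin.last k) ≅ Y) ∧
    ∀ i : Fin k, ∃ (f : E i.castSucc ⟶ E i.succ) (g : E i.succ ⟶ G⟦n i⟧)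
      (h : G⟦n i⟧ ⟶ (E i.castSucc)⟦(1 : ℤ)⟧),
      Triangle.mk f g h ∈ distTriang (DerivedCategory (ModuleCat.{u} R))

/-- Let `G` be an object of `D(R)` with all cohomology modules of finite
length, vanishing in degrees `|j| > N`, and let `B` be the maximum of the lengths
`length_R Hʲ(G)` for `-N ≤ j ≤ N`. If `Y` admits a tower over `G` with shifts
`n 0, …, n (k-1)`, then `H⁰(Y)` has finite length and, for every real `t`,
`length_R H⁰(Y) ≤ B · e^{N·|t|} · ∑ i, e^{n i · t}`. -/
theorem length_H0_le_complexity (G Y : DerivedCategory (ModuleCat.{u} R)) (N : ℕ)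
    (hfin : ∀ j : ℤ, IsFiniteLength R ((DerivedCategory.homologyFunctor (ModuleCat.{u} R) j).obj G))
    (hvan : ∀ j : ℤ, (N : ℤ) < |j| →
      IsZero ((DerivedCategory.homologyFunctor (ModuleCat.{u} R) j).obj G))
    (B : ℕ)
    (hB : (B : ℕ∞) = (Finset.Icc (-(N : ℤ)) (N : ℤ)).sup
      (fun j => moduleLength R ((DerivedCategory.homologyFunctor (ModuleCat.{u} R) j).obj G)))
    {k : ℕ} (n : Fin k → ℤ) (E : Fin (k + 1) → DerivedCategory (ModuleCat.{u} R))
    (hE : IsTower G Y n E) :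
    IsFiniteLength R ((DerivedCategory.homologyFunctor (ModuleCat.{u} R) 0).obj Y) ∧
    ∀ t : ℝ,
      ((moduleLength R ((DerivedCategory.homologyFunctor (ModuleCat.{u} R) 0).obj Y)).toNat : ℝ) ≤
        B * Real.exp (N * |t|) * ∑ i : Fin k, Real.exp (n i * t) := by

  obtain ⟨h0, ⟨eY⟩, htri⟩ := hE
  set F0 := DerivedCategory.homologyFunctor (ModuleCat.{u} R) 0 with hF0
  -- shift comparison
  have eshift : ∀ (m : ℤ), (F0.obj (G⟦m⟧) : Type u) ≃ₗ[R]
      ((DerivedCategory.homologyFunctor (ModuleCat.{u} R) m).obj G : Type u) :=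
    fun m => (((F0.isoShift m).app G :
      F0.obj (G⟦m⟧) ≅ (DerivedCategory.homologyFunctor (ModuleCat.{u} R) m).obj G)).toLinearEquiv
  set c : Fin k → ℕ∞ := fun i =>
    moduleLength R ((DerivedCategory.homologyFunctor (ModuleCat.{u} R) (n i)).obj G) with hc
  -- the main induction
  have key : ∀ i : Fin (k + 1), IsFiniteLength R (F0.obj (E i)) ∧
      moduleLength R (F0.obj (E i)) ≤
        ∑ j ∈ Finset.univ.filter (fun j : Fin k => (j : ℕ) < (i : ℕ)), c j := by
    intro i
    induction i using Fin.induction with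
    | zero =>
      haveI : Subsingleton (F0.obj (E 0)) :=
        moduleCat_subsingleton_of_isZero (F0.map_isZero h0)
      exact ⟨.of_subsingleton, by rw [moduleLength_eq_zero_of_subsingleton]; exact zero_le⟩
    | succ i ih =>
      obtain ⟨f, g, h, htri'⟩ := htri i
      have hexact := DerivedCategory.HomologySequence.exact₂ (Triangle.mk f g h) htri' 0
      have hrk := hexact.moduleCat_range_eq_ker
      have hGfin : IsFiniteLength R (F0.obj (G⟦n i⟧)) :=
        (eshift (n i)).symm.isFiniteLength (hfin (n i))
      have hGlen : moduleLength R (F0.obj (G⟦n i⟧)) = c i :=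
        moduleLength_congr (eshift (n i))
      constructor
      · exact isFiniteLength_of_exact (F0.map f).hom (F0.map g).hom hrk ih.1 hGfin
      · have hstep := moduleLength_le_of_exact (F0.map f).hom (F0.map g).hom hrk
        have hins : Finset.univ.filter (fun j : Fin k => (j : ℕ) < (i.succ : ℕ)) =
            insert i (Finset.univ.filter (fun j : Fin k => (j : ℕ) < (i.castSucc : ℕ))) := by
          ext j
          simp only [Finset.mem_filter, Finset.mem_insert, Finset.mem_univ, true_and,
            Fin.val_succ, Fin.coe_castSucc, Fin.ext_iff]
          omega
        rw [hins, Finset.sum_insert (by simp)]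
        calc moduleLength R (F0.obj (E i.succ)) ≤
            moduleLength R (F0.obj (E i.castSucc)) + moduleLength R (F0.obj (G⟦n i⟧)) := hstep
          _ ≤ (∑ j ∈ Finset.univ.filter (fun j : Fin k => (j : ℕ) < (i.castSucc : ℕ)), c j)
              + c i := add_le_add ih.2 hGlen.le
          _ = c i + ∑ j ∈ Finset.univ.filter (fun j : Fin k => (j : ℕ) < (i.castSucc : ℕ)), c j :=
            add_comm _ _
  -- transfer to Y
  obtain ⟨hfinlast, hlenlast⟩ := key (Fin.last k)
  have eYl : (F0.obj (E (Fin.last k)) : Type u) ≃ₗ[R] (F0.obj Y : Type u) :=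
    (F0.mapIso eY).toLinearEquiv
  have hYfin : IsFiniteLength R (F0.obj Y) := eYl.isFiniteLength hfinlast
  have hfilter : Finset.univ.filter (fun j : Fin k => (j : ℕ) < ((Fin.last k) : ℕ)) =
      Finset.univ := by
    ext j; simp [j.isLt]
  have hYlen : moduleLength R (F0.obj Y) ≤ ∑ j : Fin k, c j := by
    rw [← moduleLength_congr eYl]
    rw [hfilter] at hlenlast
    exact hlenlast
  -- numeric estimates
  set d : Fin k → ℕ := fun i => if |n i| ≤ (N : ℤ) then B else 0 with hd
  have hcd : ∀ i : Fin k, c i ≤ (d i : ℕ∞) := by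
    intro i
    by_cases hi : |n i| ≤ (N : ℤ)
    · have hmem : n i ∈ Finset.Icc (-(N : ℤ)) (N : ℤ) := by
        rw [Finset.mem_Icc]; exact abs_le.1 hi
      have := Finset.le_sup (f := fun j =>
        moduleLength R ((DerivedCategory.homologyFunctor (ModuleCat.{u} R) j).obj G)) hmem
      rw [← hB] at this
      simpa [hd, hi] using this
    · haveI : Subsingleton ((DerivedCategory.homologyFunctor (ModuleCat.{u} R) (n i)).obj G) :=
        moduleCat_subsingleton_of_isZero (hvan (n i) (not_le.1 hi))
      simp [hc, hd, hi, moduleLength_eq_zero_of_subsingleton]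
  have hsum : moduleLength R (F0.obj Y) ≤ ((∑ i : Fin k, d i : ℕ) : ℕ∞) := by
    rw [Nat.cast_sum]
    exact hYlen.trans (Finset.sum_le_sum fun i _ => hcd i)
  have htoNat : (moduleLength R (F0.obj Y)).toNat ≤ ∑ i : Fin k, d i :=
    ENat.toNat_le_of_le_coe hsum
  refine ⟨hYfin, fun t => ?_⟩
  have hreal : ((∑ i : Fin k, d i : ℕ) : ℝ) ≤
      B * Real.exp (N * |t|) * ∑ i : Fin k, Real.exp (n i * t) := by
    rw [Nat.cast_sum, Finset.mul_sum]
    refine Finset.sum_le_sum fun i _ => ?_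
    by_cases hi : |n i| ≤ (N : ℤ)
    · have hexp : (1 : ℝ) ≤ Real.exp (N * |t|) * Real.exp (n i * t) := by
        rw [← Real.exp_add]
        apply Real.one_le_exp
        have h1 : |(n i : ℝ) * t| ≤ (N : ℝ) * |t| := by
          rw [abs_mul]
          apply mul_le_mul_of_nonneg_right _ (abs_nonneg t)
          rw [← Int.cast_abs]
          exact_mod_cast hi
        have h2 := neg_abs_le ((n i : ℝ) * t)
        linarith
      have : (d i : ℝ) = (B : ℝ) := by simp [hd, hi]
      rw [this, mul_assoc]
      exact le_mul_of_one_le_right (Nat.cast_nonneg B) hexp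
    · have : (d i : ℝ) = 0 := by simp [hd, hi]
      rw [this, mul_assoc]
      positivity
  calc ((moduleLength R (F0.obj Y)).toNat : ℝ) ≤ ((∑ i : Fin k, d i : ℕ) : ℝ) := by
        exact_mod_cast htoNat
    _ ≤ _ := hreal
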